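/- Closeness of the approximate rarefaction wave to the self-similar fan inside the fan region (Lemma 2.2, part (6)): For every ε ∈ (0,1) there exists a positive constant C_ε such that for all t ≥ 1 and all x with λ_m t ≤ x ≤ λ_+ t: |u^R(t,x) − u^r(x/t)| ≤ C_ε δ_R^{ε} t^{−1+ε}. -/

import Mathlib

private lemma sqrt_sub_mul_le {a b c : ℝ} (hc : 0 < c) (ha : c^2 ≤ a) (hb : c^2 ≤ b) :
    (Real.sqrt a - Real.sqrt b) * (2*c) ≤ |a - b| := by
  have ha0 : 0 ≤ a := le_trans (sq_nonneg c) ha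
  have hb0 : 0 ≤ b := le_trans (sq_nonneg c) hb
  have hsa : c ≤ Real.sqrt a := by
    rw [show c = Real.sqrt (c^2) from (Real.sqrt_sq hc.le).symm]
    exact Real.sqrt_le_sqrt ha
  have hsb : c ≤ Real.sqrt b := by
    rw [show c = Real.sqrt (c^2) from (Real.sqrt_sq hc.le).symm]
    exact Real.sqrt_le_sqrt hb
  have hqa : Real.sqrt a ^ 2 = a := Real.sq_sqrt ha0
  have hqb : Real.sqrt b ^ 2 = b := Real.sq_sqrt hb0
  rcases le_total (Real.sqrt b) (Real.sqrt a) with h | h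
  · have hpos : 0 ≤ Real.sqrt a + Real.sqrt b - 2*c := by linarith
    have := mul_nonneg (sub_nonneg.2 h) hpos
    nlinarith [le_abs_self (a - b)]
  · have h1 : (Real.sqrt a - Real.sqrt b) * (2*c) ≤ 0 :=
      mul_nonpos_of_nonpos_of_nonneg (by linarith) (by linarith)
    exact le_trans h1 (abs_nonneg _)

private lemma sqrt_diff_le {a b c : ℝ} (hc : 0 < c) (ha : c^2 ≤ a) (hb : c^2 ≤ b) :
    |Real.sqrt a - Real.sqrt b| ≤ |a - b| / (2*c) := by
  rw [abs_sub_le_iff]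
  constructor <;> rw [le_div_iff₀ (by positivity)]
  · exact sqrt_sub_mul_le hc ha hb
  · rw [abs_sub_comm]; exact sqrt_sub_mul_le hc hb ha

private lemma one_sub_tanh_le (y : ℝ) : 1 - Real.tanh y ≤ 2 * Real.exp (-(2*y)) := by
  have ha := Real.exp_pos y
  have hb := Real.exp_pos (-y)
  have hab : Real.exp y * Real.exp (-y) = 1 := by rw [← Real.exp_add]; simp
  have h2 : Real.exp (-(2*y)) = Real.exp (-y) * Real.exp (-y) := by
    rw [← Real.exp_add]; ring_nf
  have hkey : 1 - Real.tanh y = 2 * Real.exp (-y) / (Real.exp y + Real.exp (-y)) := by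
    rw [Real.tanh_eq_sinh_div_cosh, Real.sinh_eq, Real.cosh_eq]
    field_simp
    ring
  rw [hkey, h2, div_le_iff₀ (by positivity)]
  nlinarith [hab, hb, mul_pos (mul_pos hb hb) hb]

private lemma one_add_tanh_le (y : ℝ) : 1 + Real.tanh y ≤ 2 * Real.exp (2*y) := by
  have := one_sub_tanh_le (-y)
  rw [Real.tanh_neg] at this
  have h : -(2 * -y) = 2*y := by ring
  rw [h] at this
  linarith

private lemma abs_tanh_le_one (y : ℝ) : |Real.tanh y| ≤ 1 := by
  have ha := Real.exp_pos y
  have hb := Real.exp_pos (-y)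
  rw [Real.tanh_eq_sinh_div_cosh, Real.sinh_eq, Real.cosh_eq, abs_le]
  constructor
  · rw [le_div_iff₀ (by positivity)]; nlinarith
  · rw [div_le_iff₀ (by positivity)]; nlinarith

private lemma key_rpow_bound {ε M s : ℝ} (hε : 0 < ε) (hM : 0 ≤ M) (hs : 0 ≤ s)
    (h : s * Real.exp s ≤ M) :
    s ≤ (M * (1/ε) ^ (1/ε : ℝ)) ^ (ε/(1+ε)) := by
  have hKpos : (0:ℝ) < (1/ε) ^ (1/ε : ℝ) := Real.rpow_pos_of_pos (by positivity) _
  rcases hs.eq_or_lt with h0 | hs'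
  · rw [← h0]; positivity
  · have h1 : ε * s ≤ Real.exp (ε * s) := by linarith [Real.add_one_le_exp (ε*s)]
    have h2 : (ε*s) ^ (1/ε : ℝ) ≤ Real.exp (ε*s) ^ (1/ε : ℝ) :=
      Real.rpow_le_rpow (by positivity) h1 (by positivity)
    have h3 : Real.exp (ε*s) ^ (1/ε : ℝ) = Real.exp s := by
      rw [← Real.exp_mul]
      congr 1
      field_simp
    have h4 : (ε*s) ^ (1/ε : ℝ) = ε ^ (1/ε : ℝ) * s ^ (1/ε : ℝ) :=
      Real.mul_rpow hε.le hs
    have h5 : ε ^ (1/ε : ℝ) * s ^ (1/ε : ℝ) ≤ Real.exp s := by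
      rw [← h4, ← h3]; exact h2
    have h6 : s ^ ((1:ℝ) + 1/ε) = s * s ^ (1/ε : ℝ) := by
      rw [Real.rpow_add hs', Real.rpow_one]
    have hεK : 0 < ε ^ (1/ε : ℝ) := Real.rpow_pos_of_pos hε _
    have hKinv : (1/ε : ℝ) ^ (1/ε : ℝ) = (ε ^ (1/ε : ℝ))⁻¹ := by
      rw [one_div, Real.inv_rpow hε.le]
    have h7 : s ^ ((1:ℝ) + 1/ε) ≤ M * (1/ε) ^ (1/ε : ℝ) := by
      have hA : s * (ε ^ (1/ε : ℝ) * s ^ (1/ε : ℝ)) ≤ M :=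
        le_trans (mul_le_mul_of_nonneg_left h5 hs) h
      rw [h6, hKinv, ← div_eq_mul_inv, le_div_iff₀ hεK]
      nlinarith [hA]
    have hexp : ((1:ℝ) + 1/ε) * (ε/(1+ε)) = 1 := by
      field_simp
      ring
    calc s = (s ^ ((1:ℝ) + 1/ε)) ^ (ε/(1+ε)) := by
              rw [← Real.rpow_mul hs'.le, hexp, Real.rpow_one]
      _ ≤ (M * (1/ε) ^ (1/ε : ℝ)) ^ (ε/(1+ε)) :=
          Real.rpow_le_rpow (Real.rpow_nonneg hs'.le _) h7 (by positivity)

set_option maxHeartbeats 1000000 in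
/-- Closeness of the approximate rarefaction wave to the self-similar fan inside the
fan region (Lemma 2.2, part (6)). -/
theorem rarefaction_inside_fan
    (um up lm lp dR : ℝ) (h0 : 0 < um) (hup : um < up)
    (hlm : lm = 3 * um ^ 2) (hlp : lp = 3 * up ^ 2) (hdR : dR = up - um)
    (w0 : ℝ → ℝ) (hw0 : ∀ x, w0 x = (lp + lm) / 2 + (lp - lm) / 2 * Real.tanh x)
    (x0 : ℝ → ℝ → ℝ) (hx0 : ∀ t, 0 ≤ t → ∀ x, x = x0 t x + w0 (x0 t x) * t)
    (uR : ℝ → ℝ → ℝ) (huR : ∀ t x, uR t x = Real.sqrt (w0 (x0 t x) / 3))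
    (ur : ℝ → ℝ)
    (hur : ∀ s, ur s = if s ≤ lm then um else if s ≤ lp then Real.sqrt (s / 3) else up) :
    ∀ ε : ℝ, 0 < ε → ε < 1 → ∃ C > 0, ∀ t : ℝ, 1 ≤ t →
      ∀ x : ℝ, lm * t ≤ x → x ≤ lp * t →
        |uR t x - ur (x / t)| ≤ C * dR ^ ε * t ^ (-1 + ε) := by
  intro ε hε hε1
  have hll : lm < lp := by rw [hlm, hlp]; nlinarith
  have hdRpos : 0 < dR := by rw [hdR]; linarith
  have hdRe : (0:ℝ) < dR ^ ε := Real.rpow_pos_of_pos hdRpos ε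
  set K : ℝ := (1/ε) ^ (1/ε : ℝ) with hK
  have hKpos : 0 < K := Real.rpow_pos_of_pos (by positivity) _
  set θ : ℝ := ε/(1+ε) with hθ
  have hθpos : 0 < θ := by positivity
  have hθle : θ ≤ ε := by
    rw [hθ]
    exact div_le_self hε.le (by linarith)
  set D : ℝ := (2*(lp - lm)*K) ^ θ with hD
  have hDpos : 0 < D := Real.rpow_pos_of_pos (by nlinarith [hll, hKpos]) _
  refine ⟨D/(12*um*dR^ε), by positivity, ?_⟩
  intro t ht x hx1 hx2
  have htpos : 0 < t := lt_of_lt_of_le one_pos ht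
  set y := x0 t x with hy
  have hxy : x = y + w0 y * t := hx0 t (by linarith) x
  have hwy : w0 y = (lp + lm) / 2 + (lp - lm) / 2 * Real.tanh y := hw0 y
  have hxy2 : x = y + ((lp + lm) / 2 + (lp - lm) / 2 * Real.tanh y) * t := by
    rw [← hwy]; exact hxy
  have htb := abs_tanh_le_one y
  rw [abs_le] at htb
  have hwlo : lm ≤ w0 y := by rw [hwy]; nlinarith [htb.1]
  have hwhi : w0 y ≤ lp := by rw [hwy]; nlinarith [htb.2]
  -- key exponential bound on |y|
  have key : |y| * Real.exp (2*|y|) ≤ (lp - lm) * t := by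
    rcases le_or_gt 0 y with hy0 | hy0
    · rw [abs_of_nonneg hy0]
      have h1 := one_sub_tanh_le y
      have h1' := mul_le_mul_of_nonneg_left h1
        (show (0:ℝ) ≤ (lp - lm)/2 * t by nlinarith [hll, htpos])
      have h2 : y ≤ (lp - lm) * Real.exp (-(2*y)) * t := by nlinarith [h1', hx2, hxy2]
      have h3 := mul_le_mul_of_nonneg_right h2 (Real.exp_pos (2*y)).le
      have e2 : (lp - lm) * Real.exp (-(2*y)) * t * Real.exp (2*y) = (lp - lm) * t := by
        rw [show (lp - lm) * Real.exp (-(2*y)) * t * Real.exp (2*y)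
            = (lp - lm) * t * (Real.exp (-(2*y)) * Real.exp (2*y)) by ring,
          ← Real.exp_add]
        simp
      linarith [h3, e2.le, e2.ge]
    · rw [abs_of_neg hy0]
      have h1 := one_add_tanh_le y
      have h1' := mul_le_mul_of_nonneg_left h1
        (show (0:ℝ) ≤ (lp - lm)/2 * t by nlinarith [hll, htpos])
      have h2 : -y ≤ (lp - lm) * Real.exp (2*y) * t := by nlinarith [h1', hx1, hxy2]
      have h3 := mul_le_mul_of_nonneg_right h2 (Real.exp_pos (2*(-y))).le
      have e2 : (lp - lm) * Real.exp (2*y) * t * Real.exp (2*(-y)) = (lp - lm) * t := by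
        rw [show (lp - lm) * Real.exp (2*y) * t * Real.exp (2*(-y))
            = (lp - lm) * t * (Real.exp (2*y) * Real.exp (2*(-y))) by ring,
          ← Real.exp_add]
        simp
      linarith [h3, e2.le, e2.ge]
  -- apply the rpow lemma with s = 2|y|, M = 2(lp-lm)t
  have hkey2 : (2*|y|) * Real.exp (2*|y|) ≤ 2*((lp - lm)*t) := by linarith [key]
  have hs := key_rpow_bound hε (by nlinarith [hll, htpos] : (0:ℝ) ≤ 2*((lp-lm)*t))
    (by positivity : (0:ℝ) ≤ 2*|y|) hkey2
  have hsplit : (2*((lp-lm)*t) * K) ^ θ = D * t ^ θ := by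
    rw [hD, show 2*((lp-lm)*t) * K = (2*(lp-lm)*K) * t by ring,
      Real.mul_rpow (by nlinarith [hll, hKpos]) htpos.le]
  have hyD : 2*|y| ≤ D * t ^ ε := by
    calc 2*|y| ≤ (2*((lp-lm)*t) * K) ^ θ := hs
      _ = D * t ^ θ := hsplit
      _ ≤ D * t ^ ε :=
          mul_le_mul_of_nonneg_left (Real.rpow_le_rpow_of_exponent_le ht hθle) hDpos.le
  -- x/t in the fan
  have hx_t_lo : lm ≤ x/t := (le_div_iff₀ htpos).2 (by linarith)
  have hx_t_hi : x/t ≤ lp := (div_le_iff₀ htpos).2 (by linarith)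
  have hurEq : ur (x/t) = Real.sqrt ((x/t)/3) := by
    by_cases h1 : x/t ≤ lm
    · have hxt : x/t = lm := le_antisymm h1 hx_t_lo
      rw [hur, if_pos h1, hxt, hlm, show (3*um^2)/3 = um^2 by ring, Real.sqrt_sq h0.le]
    · rw [hur, if_neg h1, if_pos hx_t_hi]
  have ha : um^2 ≤ w0 y / 3 := by rw [hlm] at hwlo; linarith
  have hb : um^2 ≤ (x/t)/3 := by rw [hlm] at hx_t_lo; linarith
  have hsqrt : |uR t x - ur (x/t)| ≤ |w0 y / 3 - (x/t)/3| / (2*um) := by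
    rw [huR, hurEq]
    exact sqrt_diff_le h0 ha hb
  have hdiff : w0 y / 3 - (x/t)/3 = -(y/t)/3 := by
    rw [hxy]
    field_simp
    ring
  have habs : |w0 y / 3 - (x/t)/3| = |y| / (3*t) := by
    rw [hdiff, abs_div, abs_neg, abs_div, abs_of_pos htpos,
      abs_of_pos (show (0:ℝ) < 3 by norm_num), div_div]
    ring
  -- final assembly
  have hfin : |uR t x - ur (x/t)| ≤ |y| / (6*um*t) := by
    rw [habs] at hsqrt
    calc |uR t x - ur (x/t)| ≤ (|y|/(3*t))/(2*um) := hsqrt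
      _ = |y| / (6*um*t) := by rw [div_div, show (3*t)*(2*um) = 6*um*t by ring]
  have hre : t ^ (-1 + ε : ℝ) = t ^ ε / t := by
    rw [show (-1 + ε : ℝ) = ε + (-1) by ring, Real.rpow_add htpos, Real.rpow_neg_one]
    rw [div_eq_mul_inv]
  have hCdr : D/(12*um*dR^ε) * dR ^ ε = D / (12*um) := by
    field_simp
  rw [hCdr, hre]
  have htε : 0 < t ^ ε := Real.rpow_pos_of_pos htpos ε
  calc |uR t x - ur (x/t)| ≤ |y| / (6*um*t) := hfin
    _ ≤ (D * t ^ ε / 2) / (6*um*t) := by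
        apply div_le_div_of_nonneg_right ?_ (by positivity)
        · linarith
    _ = D / (12*um) * (t ^ ε / t) := by field_simp; ring
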